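/- For words v, w ∈ A*, with k = |v| and l = max{|w|,|v|}, the set C(w,v) is a finite disjoint union of equivalence classes of the relation ~_{(k,l)}: there is a finite set of representatives x₁,…,x_m of the l-past equivalence classes and F ⊆ {1,…,m} with C(w,v) = ⋃_{f∈F} (C(v) ∩ σ^{-k}([x_f]_l)), where [x]_l is the l-past equivalence class. -/
import Mathlib


open Function

/-- The one-sided shift map on `ℕ → A`. -/
def shft {A : Type*} (x : ℕ → A) : ℕ → A := fun n => x (n + 1)

/-- Concatenation of a finite word `w` with an infinite word `x`. -/
def wcat {A : Type*} (w : List A) (x : ℕ → A) : ℕ → A :=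
  fun n => w.getD n (x (n - w.length))

/-- Partial bijections on `ℕ → A` modelled as relations (sets of pairs (input, output)). -/
abbrev PB (A : Type*) := Set ((ℕ → A) × (ℕ → A))

/-- Composition on the largest possible domain: `rcomp r s` applies `s` first, then `r`
(i.e. the semigroup product `r · s`). -/
def rcomp {A : Type*} (r s : PB A) : PB A := {p | ∃ y, (p.1, y) ∈ s ∧ (y, p.2) ∈ r}

/-- Inverse of a partial bijection. -/
def rinv {A : Type*} (r : PB A) : PB A := {p | (p.2, p.1) ∈ r}

/-- The identity map on a subset `U`. -/
def idOn {A : Type*} (U : Set (ℕ → A)) : PB A := {p | p.1 ∈ U ∧ p.2 = p.1}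

/-- The partial bijection `s_μ : x ↦ μx` on `{x ∈ X : μx ∈ X}`. -/
def sMap {A : Type*} (X : Set (ℕ → A)) (μ : List A) : PB A :=
  {p | p.1 ∈ X ∧ wcat μ p.1 ∈ X ∧ p.2 = wcat μ p.1}

/-- The cylinder set `C(v) = {vx : x ∈ A^ℕ} ∩ X`. -/
def Cyl {A : Type*} (X : Set (ℕ → A)) (v : List A) : Set (ℕ → A) :=
  {y | y ∈ X ∧ ∃ x, y = wcat v x}

/-- `C(μ,ν) = {νx ∈ X : μx ∈ X}`. -/
def Cmn {A : Type*} (X : Set (ℕ → A)) (μ ν : List A) : Set (ℕ → A) :=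
  {y | ∃ x, y = wcat ν x ∧ y ∈ X ∧ wcat μ x ∈ X}

/-- `C(F;v) = {vx ∈ X : fx ∈ X for all f ∈ F}`. -/
def CFv {A : Type*} (X : Set (ℕ → A)) (F : Finset (List A)) (v : List A) : Set (ℕ → A) :=
  {y | ∃ x, y = wcat v x ∧ y ∈ X ∧ ∀ f ∈ F, wcat f x ∈ X}

/-- The idempotent `E(F;v) = Id_{C(F;v)}`. -/
def Efv {A : Type*} (X : Set (ℕ → A)) (F : Finset (List A)) (v : List A) : PB A :=
  idOn (CFv X F v)

/-- The set `E_X = {E(F;v)} ∪ {0}` of idempotents. -/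
def EXset {A : Type*} (X : Set (ℕ → A)) : Set (PB A) :=
  {r | r = ∅ ∨ ∃ (F : Finset (List A)) (v : List A), r = Efv X F v}

/-- The element `s_α E(F;v) s_β^*` of `I(X)`. -/
def elt {A : Type*} (X : Set (ℕ → A)) (α : List A) (F : Finset (List A)) (v β : List A) :
    PB A :=
  rcomp (rcomp (sMap X α) (Efv X F v)) (rinv (sMap X β))

/-- The inverse semigroup `S_X = {s_α E(F;v) s_β^*} ∪ {0}` (closed form). -/
def SXset {A : Type*} (X : Set (ℕ → A)) : Set (PB A) :=
  {r | r = ∅ ∨ ∃ (α β v : List A) (F : Finset (List A)), r = elt X α F v β}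

/-- `α` and `β` are in lowest terms: they do not both end with the same letter. -/
def LowTerms {A : Type*} (α β : List A) : Prop :=
  ∀ a : A, ¬(α.getLast? = some a ∧ β.getLast? = some a)

/-- A word viewed as an element of the free group on `A`. -/
def wgrp {A : Type*} (w : List A) : FreeGroup A := (w.map FreeGroup.of).prod

/-- Natural partial order on partial bijections: `s ≤ t` iff `t s^* s = s`. -/
def rle {A : Type*} (s t : PB A) : Prop := rcomp t (rcomp (rinv s) s) = s

/-- `P_k(x) = {μ ∈ A^k : μx ∈ X}`. -/
def Pk {A : Type*} (X : Set (ℕ → A)) (k : ℕ) (x : ℕ → A) : Set (List A) :=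
  {μ | μ.length = k ∧ wcat μ x ∈ X}

/-- `l`-past equivalence: `P_r(x) = P_r(y)` for all `r ≤ l`. -/
def pastEq {A : Type*} (X : Set (ℕ → A)) (l : ℕ) (x y : ℕ → A) : Prop :=
  ∀ r ≤ l, Pk X r x = Pk X r y

/-- The relation `x ~_{(k,l)} y`. -/
def klEq {A : Type*} (X : Set (ℕ → A)) (k l : ℕ) (x y : ℕ → A) : Prop :=
  (∀ i < k, x i = y i) ∧ pastEq X l (shft^[k] x) (shft^[k] y)

lemma shft_iterate {A : Type*} (n : ℕ) (x : ℕ → A) (m : ℕ) :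
    (shft^[n] x) m = x (m + n) := by
  induction n generalizing x with
  | zero => rfl
  | succ n ih =>
    rw [Function.iterate_succ_apply, ih]
    simp [shft, Nat.add_assoc, Nat.add_comm 1 n]

lemma shft_iterate_wcat {A : Type*} (v : List A) (x : ℕ → A) :
    shft^[v.length] (wcat v x) = x := by
  funext m
  rw [shft_iterate, wcat, List.getD_eq_default _ _ (by omega)]
  simp

lemma mem_shft_iterate {A : Type*} {X : Set (ℕ → A)} (hXsh : ∀ x ∈ X, shft x ∈ X)
    (n : ℕ) {y : ℕ → A} (hy : y ∈ X) : shft^[n] y ∈ X := by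
  induction n with
  | zero => exact hy
  | succ n ih => rw [Function.iterate_succ_apply']; exact hXsh _ ih

lemma pastEq_iff {A : Type*} (X : Set (ℕ → A)) (l : ℕ) (x y : ℕ → A) :
    pastEq X l x y ↔ ∀ μ : List A, μ.length ≤ l → (wcat μ x ∈ X ↔ wcat μ y ∈ X) := by
  constructor
  · intro h μ hμ
    have := h μ.length hμ
    constructor
    · intro hx
      have : μ ∈ Pk X μ.length y := this ▸ ⟨rfl, hx⟩
      exact this.2
    · intro hy
      have : μ ∈ Pk X μ.length x := this ▸ ⟨rfl, hy⟩
      exact this.2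
  · intro h r hr
    ext μ
    constructor
    · rintro ⟨h1, h2⟩; exact ⟨h1, (h μ (h1 ▸ hr)).mp h2⟩
    · rintro ⟨h1, h2⟩; exact ⟨h1, (h μ (h1 ▸ hr)).mpr h2⟩

theorem stmt18 {A : Type*} [Fintype A] [TopologicalSpace A] [DiscreteTopology A]
    (X : Set (ℕ → A)) (hXcl : IsClosed X) (hXsh : ∀ x ∈ X, shft x ∈ X)
    (w v : List A) :
    ∃ (m : ℕ) (xs : Fin m → (ℕ → A)),
      (∀ i, xs i ∈ X) ∧
      (∀ y ∈ X, ∃ i, pastEq X (max w.length v.length) y (xs i)) ∧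
      (∀ i j, pastEq X (max w.length v.length) (xs i) (xs j) → i = j) ∧
      ∃ Fs : Finset (Fin m),
        Cmn X w v = ⋃ f ∈ Fs,
          (Cyl X v ∩
            (shft^[v.length]) ⁻¹'
              {y | y ∈ X ∧ pastEq X (max w.length v.length) y (xs f)}) := by
  classical
  set l := max w.length v.length with hl
  set φ : (ℕ → A) → Set (List A) := fun y => {μ | μ.length ≤ l ∧ wcat μ y ∈ X} with hφ
  have hpe : ∀ x y : ℕ → A, pastEq X l x y ↔ φ x = φ y := by
    intro x y
    rw [pastEq_iff]
    constructor
    · intro h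
      ext μ
      constructor
      · rintro ⟨h1, h2⟩; exact ⟨h1, (h μ h1).mp h2⟩
      · rintro ⟨h1, h2⟩; exact ⟨h1, (h μ h1).mpr h2⟩
    · intro h μ hμ
      constructor
      · intro hx
        have : μ ∈ φ y := h ▸ ⟨hμ, hx⟩
        exact this.2
      · intro hy
        have : μ ∈ φ x := h ▸ ⟨hμ, hy⟩
        exact this.2
  -- the image of X under φ is finite
  have hS : (φ '' X).Finite := by
    apply Set.Finite.subset (List.finite_length_le A l).finite_subsets
    rintro _ ⟨y, _, rfl⟩
    intro μ hμ
    exact hμ.1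
  set t := hS.toFinset with ht
  set e := t.equivFin.symm with he
  have hrep : ∀ i : Fin t.card, ∃ y ∈ X, φ y = (e i : Set (List A)) := by
    intro i
    have : (e i : Set (List A)) ∈ φ '' X := hS.mem_toFinset.mp (e i).2
    obtain ⟨y, hy, hφy⟩ := this
    exact ⟨y, hy, hφy⟩
  refine ⟨t.card, fun i => (hrep i).choose, fun i => (hrep i).choose_spec.1, ?_, ?_, ?_⟩
  · intro y hy
    have : φ y ∈ t := hS.mem_toFinset.mpr ⟨y, hy, rfl⟩
    refine ⟨t.equivFin ⟨φ y, this⟩, ?_⟩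
    rw [hpe, (hrep _).choose_spec.2]
    simp [he]
  · intro i j hij
    rw [hpe, (hrep i).choose_spec.2, (hrep j).choose_spec.2] at hij
    have : e i = e j := Subtype.ext hij
    exact e.injective this
  · refine ⟨Finset.univ.filter (fun i => wcat w ((hrep i).choose) ∈ X), ?_⟩
    ext y
    simp only [Set.mem_iUnion, Finset.mem_filter, Finset.mem_univ, true_and,
      Set.mem_inter_iff, Set.mem_preimage, Set.mem_setOf_eq]
    constructor
    · rintro ⟨x, rfl, hyX, hwx⟩
      have hxX : x ∈ X := by
        have := mem_shft_iterate hXsh v.length hyX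
        rwa [shft_iterate_wcat] at this
      have : φ x ∈ t := hS.mem_toFinset.mpr ⟨x, hxX, rfl⟩
      set i := t.equivFin ⟨φ x, this⟩ with hi
      have hpex : pastEq X l x ((hrep i).choose) := by
        rw [hpe, (hrep i).choose_spec.2]
        simp [he, hi]
      refine ⟨i, ?_, ⟨hyX, x, rfl⟩, ?_⟩
      · exact ((pastEq_iff X l _ _).mp hpex w (le_max_left _ _)).mp hwx
      · rw [shft_iterate_wcat]
        exact ⟨hxX, hpex⟩
    · rintro ⟨i, hiw, ⟨hyX, x, rfl⟩, hpre⟩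
      rw [shft_iterate_wcat] at hpre
      obtain ⟨hxX, hpex⟩ := hpre
      refine ⟨x, rfl, hyX, ?_⟩
      exact ((pastEq_iff X l _ _).mp hpex w (le_max_left _ _)).mpr hiw
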